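/- A criterion for moderation (Proposition 4.6): There exists a constant c < ∞, depending only on d, such that the following holds. Let k : ℝ₊ → ℝ₊ be measurable with ∫_0^∞ (1+t²) k_t dt < ∞, define K_t = k_t + ∫_t^∞ s k_s ds, and, for a dynamic environment a, define weights by w_t(e)² = ∫_t^∞ k_{s−t} a_s(e) ds. Then the environment a is (w, cK)-moderate; that is, for every t ≥ 0, ∑_{e∈𝔹} w_t(e)² |∇u_t|(e)² ≤ c ∫_t^∞ K_{s−t} D_s ds. -/

import Mathlib

open scoped ENNReal NNReal
open Set MeasureTheory

noncomputable section

namespace AnchoredNash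

/-- Vertices of `ℤ^d`. -/
abbrev Zd (d : ℕ) : Type := Fin d → ℤ

/-- Nearest-neighbour edges of `ℤ^d`, encoded as a base point together with a
direction: the pair `(x, i)` stands for the edge `{x, x + eᵢ}`. -/
abbrev Edge (d : ℕ) : Type := (Fin d → ℤ) × Fin d

/-- The second endpoint `x + eᵢ` of the edge `(x, i)`. -/
def eplus {d : ℕ} (e : Edge d) : Zd d := e.1 + Pi.single e.2 1

/-- Euclidean norm on `ℤ^d`. -/
def eucNorm {d : ℕ} (x : Zd d) : ℝ := Real.sqrt (∑ i, ((x i : ℝ)) ^ 2)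

/-- `|x|_* = max (|x|, 1)`. -/
def xstar {d : ℕ} (x : Zd d) : ℝ := max (eucNorm x) 1

/-- The box `B_r = {-r, …, r}^d`. -/
def box (d r : ℕ) : Finset (Zd d) := Fintype.piFinset fun _ => Finset.Icc (-(r : ℤ)) (r : ℤ)

/-- The set `𝔹_r` of edges with both endpoints in `B_r`. -/
def edgeBox (d r : ℕ) : Finset (Edge d) :=
  (box d r ×ˢ (Finset.univ : Finset (Fin d))).filter fun e => eplus e ∈ box d r

/-- Squared gradient `|∇f|(e)²` of `f` along the edge `e`, valued in `ℝ≥0∞`. -/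
def grad2 {d : ℕ} (f : Zd d → ℝ) (e : Edge d) : ℝ≥0∞ :=
  (‖f (eplus e) - f e.1‖₊ : ℝ≥0∞) ^ 2

/-- `‖f‖₂`, valued in `ℝ≥0∞`. -/
def l2 {d : ℕ} (f : Zd d → ℝ) : ℝ≥0∞ := (∑' x, (‖f x‖₊ : ℝ≥0∞) ^ 2) ^ (1/2 : ℝ)

/-- `‖f‖₁`, valued in `ℝ≥0∞`. -/
def l1 {d : ℕ} (f : Zd d → ℝ) : ℝ≥0∞ := ∑' x, (‖f x‖₊ : ℝ≥0∞)

/-- `‖w ∇f‖₂`, valued in `ℝ≥0∞`. -/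
def wGradNorm {d : ℕ} (w : Edge d → ℝ≥0) (f : Zd d → ℝ) : ℝ≥0∞ :=
  (∑' e, (w e : ℝ≥0∞) ^ 2 * grad2 f e) ^ (1/2 : ℝ)

/-- `‖ |x|_*^{p/2} f ‖₂`, valued in `ℝ≥0∞`. -/
def wl2 {d : ℕ} (p : ℝ) (f : Zd d → ℝ) : ℝ≥0∞ :=
  (∑' x, ENNReal.ofReal (xstar x ^ p) * (‖f x‖₊ : ℝ≥0∞) ^ 2) ^ (1/2 : ℝ)

/-- The anchored maximal function
`M_q(w) = (sup_{r ≥ 1} |𝔹_r|⁻¹ ∑_{e ∈ 𝔹_r} w(e)^{-q})^{1/q}`, with the convention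
`0 ^ (-q) = ∞` (automatic in `ℝ≥0∞`). -/
def Mq (d : ℕ) (q : ℝ) (w : Edge d → ℝ≥0) : ℝ≥0∞ :=
  (⨆ (r : ℕ) (_ : 1 ≤ r),
    ((edgeBox d r).card : ℝ≥0∞)⁻¹ * ∑ e ∈ edgeBox d r, (w e : ℝ≥0∞) ^ (-q)) ^ (1/q)

/-- The critical exponent `θ_c`, defined by
`1/θ_c = 1 + ((dp+2p)/(dp+2d)) (q/d - 1)`. -/
def θcrit (d : ℕ) (p q : ℝ) : ℝ :=
  1 / (1 + (((d : ℝ) * p + 2 * p) / ((d : ℝ) * p + 2 * (d : ℝ))) * (q / (d : ℝ) - 1))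

/-- `L^s` norm of `f` on the box `B_r`. -/
def boxLp (d r : ℕ) (s : ℝ) (f : Zd d → ℝ) : ℝ := (∑ x ∈ box d r, |f x| ^ s) ^ (1/s)

/-- `L^∞` norm of `f` on the box `B_r`. -/
def boxLinf (d r : ℕ) (f : Zd d → ℝ) : ℝ := sSup ((fun x => |f x|) '' (box d r : Set (Zd d)))

/-- `L^s` norm of `∇f` on the edge set `𝔹_r`. -/
def gradLp (d r : ℕ) (s : ℝ) (f : Zd d → ℝ) : ℝ :=
  (∑ e ∈ edgeBox d r, |f (eplus e) - f e.1| ^ s) ^ (1/s)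

/-- Average of `f` over the box `B_r`. -/
def avg (d r : ℕ) (f : Zd d → ℝ) : ℝ := (∑ x ∈ box d r, f x) / ((box d r).card : ℝ)

/-- Generator of the random walk among the conductances `a`:
`(gen a f) y = ∑_{z ∼ y} a({y,z}) (f z - f y)`. -/
def gen {d : ℕ} (a : Edge d → ℝ) (f : Zd d → ℝ) (y : Zd d) : ℝ :=
  ∑ i : Fin d,
    (a (y, i) * (f (y + Pi.single i 1) - f y) +
      a (y - Pi.single i 1, i) * (f (y - Pi.single i 1) - f y))

/-- `hk` is the heat kernel of the static environment `a`: the (unique) bounded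
solution of `∂_t p_t(x,y) = ∑_{z ∼ y} a({y,z})(p_t(x,z) - p_t(x,y))`, `p_0(x,y) = 1_{x=y}`,
together with its standard properties (nonnegativity, total mass one, symmetry). -/
structure IsHeatKernel (d : ℕ) (a : Edge d → ℝ) (hk : ℝ → Zd d → Zd d → ℝ) : Prop where
  bounded : ∀ t, ∃ M, ∀ x y, |hk t x y| ≤ M
  init : ∀ x y, hk 0 x y = if x = y then (1 : ℝ) else 0
  ode : ∀ x y, ∀ t ∈ Ici (0 : ℝ),
    HasDerivWithinAt (fun s => hk s x y) (gen a (fun z => hk t x z) y) (Ici (0 : ℝ)) t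
  nonneg : ∀ t x y, 0 ≤ t → 0 ≤ hk t x y
  mass : ∀ t x, 0 ≤ t → HasSum (fun y => hk t x y) 1
  symm : ∀ t x y, 0 ≤ t → hk t x y = hk t y x

/-- The Dirichlet energy `∑_e a(e) |∇u|(e)²`, valued in `ℝ≥0∞`. -/
def dirichlet {d : ℕ} (a : Edge d → ℝ) (u : Zd d → ℝ) : ℝ≥0∞ :=
  ∑' e, ENNReal.ofReal (a e) * grad2 u e

/-- The static environment `a` (with heat kernel `hk`) is `w`-moderate:
`‖w ∇u_t‖₂² ≤ D_t` for all `t ≥ 0`, where `u_t = p_t(0, ·)`. -/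
def StaticModerate (d : ℕ) (a : Edge d → ℝ) (w : Edge d → ℝ≥0)
    (hk : ℝ → Zd d → Zd d → ℝ) : Prop :=
  ∀ t, 0 ≤ t →
    ∑' e, (w e : ℝ≥0∞) ^ 2 * grad2 (fun z => hk t 0 z) e ≤ dirichlet a fun z => hk t 0 z

/-- Piecewise continuity: continuity away from a countable set. -/
def PiecewiseCts (g : ℝ → ℝ) : Prop :=
  ∃ D : Set ℝ, D.Countable ∧ ∀ t ∉ D, ContinuousAt g t

/-- A dynamic environment: for each edge, a piecewise continuous `[0,1]`-valued
function of time. -/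
def IsDynEnv (d : ℕ) (a : ℝ → Edge d → ℝ) : Prop :=
  (∀ t e, a t e ∈ Icc (0 : ℝ) 1) ∧ ∀ e, PiecewiseCts fun t => a t e

/-- `hk` is the heat kernel of the dynamic environment `a`: the (unique) bounded
solution of `∂_t p_{s,t}(x,y) = ∑_{z ∼ y} a_t({y,z})(p_{s,t}(x,z) - p_{s,t}(x,y))` with
`p_{s,s}(x,y) = 1_{x=y}` (stated in integral form), together with its standard
properties (nonnegativity, total mass one). -/
structure IsDynKernel (d : ℕ) (a : ℝ → Edge d → ℝ) (hk : ℝ → ℝ → Zd d → Zd d → ℝ) :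
    Prop where
  bounded : ∀ s t, ∃ M, ∀ x y, |hk s t x y| ≤ M
  eqn : ∀ s x y t, s ≤ t →
    hk s t x y = (if x = y then (1:ℝ) else 0) + ∫ τ in s..t, gen (a τ) (fun z => hk s τ x z) y
  nonneg : ∀ s t x y, s ≤ t → 0 ≤ hk s t x y
  mass : ∀ s t x, s ≤ t → HasSum (fun y => hk s t x y) 1

/-- The Dirichlet energy `D_t = ∑_e a_t(e) |∇u_t|(e)²` of `u_t = p_{0,t}(0,·)`. -/
def dynD (d : ℕ) (a : ℝ → Edge d → ℝ) (hk : ℝ → ℝ → Zd d → Zd d → ℝ) (t : ℝ) : ℝ≥0∞ :=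
  ∑' e : Edge d, ENNReal.ofReal (a t e) * grad2 (fun z => hk 0 t 0 z) e

/-- The dynamic environment `a` (with heat kernel `hk`) is `(w,K)`-moderate:
`‖w_t ∇u_t‖₂² ≤ D̄_t = ∫_t^∞ K_{s-t} D_s ds` for all `t ≥ 0`. -/
def DynModerate (d : ℕ) (a : ℝ → Edge d → ℝ) (K : ℝ → ℝ) (w : ℝ → Edge d → ℝ≥0)
    (hk : ℝ → ℝ → Zd d → Zd d → ℝ) : Prop :=
  ∀ t, 0 ≤ t →
    ∑' e, (w t e : ℝ≥0∞) ^ 2 * grad2 (fun z => hk 0 t 0 z) e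
      ≤ ∫⁻ s in Ici t, ENNReal.ofReal (K (s - t)) * dynD d a hk s

/-- `C(K) = max (1, ‖K‖₁^{α/β} / ‖K‖_{L¹([0,1])}^{(1-α)/β})`. -/
def CK (α β : ℝ) (K : ℝ → ℝ) : ℝ≥0∞ :=
  max 1 ((∫⁻ s in Ici (0:ℝ), ENNReal.ofReal (K s)) ^ (α / β)
    / (∫⁻ s in Icc (0:ℝ) 1, ENNReal.ofReal (K s)) ^ ((1 - α) / β))

/-- The space-time maximal quantity `𝓜_q(w)`, defined through
`𝓜_q(w)⁻² = inf_{t ≥ 1} t⁻¹ ∫_0^t M_q(w_s)⁻² ds`. -/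
def MMq (d : ℕ) (q : ℝ) (w : ℝ → Edge d → ℝ≥0) : ℝ≥0∞ :=
  (⨅ (t : ℝ) (_ : 1 ≤ t),
    ENNReal.ofReal t⁻¹ * ∫⁻ s in Ioc (0:ℝ) t, Mq d q (w s) ^ (-2 : ℝ)) ^ (-(1/2) : ℝ)

/-- The standing hypotheses on `K : ℝ₊ → ℝ₊`: measurable, nonnegative, integrable,
with positive mass on `[0,1]`. -/
def GoodK (K : ℝ → ℝ) : Prop :=
  Measurable K ∧ (∀ s, 0 ≤ K s) ∧ IntegrableOn K (Ici (0:ℝ)) ∧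
    (∫⁻ s in Icc (0:ℝ) 1, ENNReal.ofReal (K s)) ≠ 0

/-- The standing hypotheses on the weights: a measurable family with values in `[0,1]`. -/
def GoodW (d : ℕ) (w : ℝ → Edge d → ℝ≥0) : Prop :=
  (∀ t e, w t e ≤ 1) ∧ ∀ e, Measurable fun t => w t e

end AnchoredNash

namespace AnchoredNash

section Aux
variable {d : ℕ}

lemma enn_sq (x : ℝ) : (‖x‖₊ : ℝ≥0∞) ^ 2 = ENNReal.ofReal (x ^ 2) := by
  rw [← sq_abs x, ENNReal.ofReal_pow (abs_nonneg x), ← Real.enorm_eq_ofReal_abs, enorm_eq_nnnorm]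

lemma grad2_eq (f : Zd d → ℝ) (e : Edge d) :
    grad2 f e = ENNReal.ofReal ((f (eplus e) - f e.1) ^ 2) := enn_sq _

lemma grad2_ne_top (f : Zd d → ℝ) (e : Edge d) : grad2 f e ≠ ⊤ := by
  rw [grad2_eq]; exact ENNReal.ofReal_ne_top

lemma tsum_edge (P : Edge d → ℝ≥0∞) :
    ∑' e : Edge d, P e = ∑ i : Fin d, ∑' x : Zd d, P (x, i) := by
  calc ∑' e : Edge d, P e = ∑' x : Zd d, ∑' i : Fin d, P (x, i) :=
        ENNReal.tsum_prod (f := fun x i => P (x, i))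
    _ = ∑' i : Fin d, ∑' x : Zd d, P (x, i) := ENNReal.tsum_comm
    _ = ∑ i : Fin d, ∑' x : Zd d, P (x, i) := tsum_fintype _

lemma tsum_shift (i : Fin d) (g : Zd d → ℝ≥0∞) :
    ∑' y : Zd d, g (y + Pi.single i 1) = ∑' y : Zd d, g y :=
  (Equiv.addRight (Pi.single i 1 : Zd d)).tsum_eq g

lemma tsum_shift' (i : Fin d) (g : Zd d → ℝ≥0∞) :
    ∑' y : Zd d, g (y - Pi.single i 1) = ∑' y : Zd d, g y :=
  (Equiv.subRight (Pi.single i 1 : Zd d)).tsum_eq g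

lemma grad2_tsum_le (f : Zd d → ℝ) :
    ∑' e : Edge d, grad2 f e ≤ 4 * (d : ℝ≥0∞) * ∑' y, ENNReal.ofReal (f y ^ 2) := by
  have h1 : ∀ e : Edge d, grad2 f e ≤
      2 * ENNReal.ofReal (f (eplus e) ^ 2) + 2 * ENNReal.ofReal (f e.1 ^ 2) := by
    intro e
    rw [grad2_eq]
    calc ENNReal.ofReal ((f (eplus e) - f e.1) ^ 2)
        ≤ ENNReal.ofReal (2 * f (eplus e) ^ 2 + 2 * f e.1 ^ 2) :=
          ENNReal.ofReal_le_ofReal (by nlinarith [sq_nonneg (f (eplus e) + f e.1)])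
      _ = 2 * ENNReal.ofReal (f (eplus e) ^ 2) + 2 * ENNReal.ofReal (f e.1 ^ 2) := by
          rw [ENNReal.ofReal_add (by positivity) (by positivity),
            ENNReal.ofReal_mul (by norm_num), ENNReal.ofReal_mul (by norm_num)]
          norm_num
  refine le_trans (ENNReal.tsum_le_tsum h1) ?_
  rw [ENNReal.tsum_add, ENNReal.tsum_mul_left, ENNReal.tsum_mul_left]
  have h2 : ∑' e : Edge d, ENNReal.ofReal (f (eplus e) ^ 2)
      = (d : ℝ≥0∞) * ∑' y, ENNReal.ofReal (f y ^ 2) := by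
    rw [tsum_edge]
    have h : ∀ i : Fin d, ∑' x : Zd d, ENNReal.ofReal (f (eplus (x, i)) ^ 2)
        = ∑' y, ENNReal.ofReal (f y ^ 2) := fun i =>
      tsum_shift i (fun y => ENNReal.ofReal (f y ^ 2))
    simp only [h, Finset.sum_const, Finset.card_univ, Fintype.card_fin, nsmul_eq_mul]
  have h3 : ∑' e : Edge d, ENNReal.ofReal (f e.1 ^ 2)
      = (d : ℝ≥0∞) * ∑' y, ENNReal.ofReal (f y ^ 2) := by
    rw [tsum_edge]
    simp only [Finset.sum_const, Finset.card_univ, Fintype.card_fin, nsmul_eq_mul]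
  rw [h2, h3]
  exact le_of_eq (by ring)

lemma moderate_pointwise (a : Edge d → ℝ) (ha : ∀ e, a e ∈ Icc (0:ℝ) 1) (f g : Zd d → ℝ) :
    ∑' e : Edge d, ENNReal.ofReal (a e) * grad2 f e
      ≤ 2 * ∑' e : Edge d, ENNReal.ofReal (a e) * grad2 g e
        + 8 * (d : ℝ≥0∞) * ∑' y, ENNReal.ofReal ((g y - f y) ^ 2) := by
  have h1 : ∀ e : Edge d, ENNReal.ofReal (a e) * grad2 f e
      ≤ 2 * (ENNReal.ofReal (a e) * grad2 g e) + 2 * grad2 (fun z => g z - f z) e := by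
    intro e
    have hg : grad2 f e ≤ 2 * grad2 g e + 2 * grad2 (fun z => g z - f z) e := by
      rw [grad2_eq, grad2_eq, grad2_eq]
      have hptw : (f (eplus e) - f e.1) ^ 2 ≤ 2 * (g (eplus e) - g e.1) ^ 2
          + 2 * ((g (eplus e) - f (eplus e)) - (g e.1 - f e.1)) ^ 2 := by
        nlinarith [sq_nonneg ((g (eplus e) - g e.1) + ((g (eplus e) - f (eplus e)) - (g e.1 - f e.1)))]
      calc ENNReal.ofReal ((f (eplus e) - f e.1) ^ 2)
          ≤ ENNReal.ofReal (2 * (g (eplus e) - g e.1) ^ 2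
              + 2 * ((g (eplus e) - f (eplus e)) - (g e.1 - f e.1)) ^ 2) :=
            ENNReal.ofReal_le_ofReal hptw
        _ = 2 * ENNReal.ofReal ((g (eplus e) - g e.1) ^ 2)
              + 2 * ENNReal.ofReal (((g (eplus e) - f (eplus e)) - (g e.1 - f e.1)) ^ 2) := by
            rw [ENNReal.ofReal_add (by positivity) (by positivity),
              ENNReal.ofReal_mul (by norm_num), ENNReal.ofReal_mul (by norm_num)]
            norm_num
    have ha1 : ENNReal.ofReal (a e) ≤ 1 := ENNReal.ofReal_le_one.2 (ha e).2
    calc ENNReal.ofReal (a e) * grad2 f e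
        ≤ ENNReal.ofReal (a e) * (2 * grad2 g e + 2 * grad2 (fun z => g z - f z) e) :=
          mul_le_mul_right hg _
      _ = 2 * (ENNReal.ofReal (a e) * grad2 g e)
            + ENNReal.ofReal (a e) * (2 * grad2 (fun z => g z - f z) e) := by ring
      _ ≤ 2 * (ENNReal.ofReal (a e) * grad2 g e) + 1 * (2 * grad2 (fun z => g z - f z) e) :=
          add_le_add_right (mul_le_mul_left ha1 _) _
      _ = 2 * (ENNReal.ofReal (a e) * grad2 g e) + 2 * grad2 (fun z => g z - f z) e := by
          rw [one_mul]
  refine le_trans (ENNReal.tsum_le_tsum h1) ?_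
  rw [ENNReal.tsum_add, ENNReal.tsum_mul_left, ENNReal.tsum_mul_left]
  refine add_le_add_right ?_ _
  calc 2 * ∑' e : Edge d, grad2 (fun z => g z - f z) e
      ≤ 2 * (4 * (d : ℝ≥0∞) * ∑' y, ENNReal.ofReal ((g y - f y) ^ 2)) :=
        mul_le_mul_right (grad2_tsum_le _) _
    _ = 8 * (d : ℝ≥0∞) * ∑' y, ENNReal.ofReal ((g y - f y) ^ 2) := by ring

end Aux
end AnchoredNash

namespace AnchoredNash
section Aux2
variable {d : ℕ}

lemma tsum_sum_comm (g : Zd d → Fin d → ℝ≥0∞) :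
    ∑' y : Zd d, ∑ i : Fin d, g y i = ∑ i : Fin d, ∑' y : Zd d, g y i := by
  calc ∑' y : Zd d, ∑ i : Fin d, g y i = ∑' y : Zd d, ∑' i : Fin d, g y i :=
        tsum_congr fun y => (tsum_fintype _).symm
    _ = ∑' i : Fin d, ∑' y : Zd d, g y i := ENNReal.tsum_comm
    _ = ∑ i : Fin d, ∑' y : Zd d, g y i := tsum_fintype _

lemma sub_sq_comm' (a b : ℝ) : (a - b) ^ 2 = (b - a) ^ 2 := by ring

lemma gen_abs_le (a : Edge d → ℝ) (ha : ∀ e, a e ∈ Icc (0:ℝ) 1) (u : Zd d → ℝ)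
    (hu : ∀ z, u z ∈ Icc (0:ℝ) 1) (y : Zd d) : |gen a u y| ≤ 2 * d := by
  have hterm : ∀ z z' : Zd d, ∀ e : Edge d, |a e * (u z - u z')| ≤ 1 := by
    intro z z' e
    rw [abs_mul]
    have h1 : |a e| ≤ 1 := abs_le.2 ⟨by linarith [(ha e).1], (ha e).2⟩
    have h2 : |u z - u z'| ≤ 1 :=
      abs_le.2 ⟨by linarith [(hu z).1, (hu z').2], by linarith [(hu z).2, (hu z').1]⟩
    calc |a e| * |u z - u z'| ≤ 1 * 1 :=
          mul_le_mul h1 h2 (abs_nonneg _) zero_le_one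
      _ = 1 := one_mul 1
  rw [gen]
  calc |∑ i : Fin d, (a (y, i) * (u (y + Pi.single i 1) - u y)
          + a (y - Pi.single i 1, i) * (u (y - Pi.single i 1) - u y))|
      ≤ ∑ i : Fin d, |a (y, i) * (u (y + Pi.single i 1) - u y)
          + a (y - Pi.single i 1, i) * (u (y - Pi.single i 1) - u y)| :=
        Finset.abs_sum_le_sum_abs _ _
    _ ≤ ∑ _i : Fin d, (2:ℝ) := by
        refine Finset.sum_le_sum fun i _ => ?_
        calc |a (y, i) * (u (y + Pi.single i 1) - u y)
              + a (y - Pi.single i 1, i) * (u (y - Pi.single i 1) - u y)|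
            ≤ |a (y, i) * (u (y + Pi.single i 1) - u y)|
              + |a (y - Pi.single i 1, i) * (u (y - Pi.single i 1) - u y)| := abs_add_le _ _
          _ ≤ 1 + 1 := add_le_add (hterm _ _ _) (hterm _ _ _)
          _ = 2 := by norm_num
    _ = 2 * d := by
        rw [Finset.sum_const, Finset.card_univ, Fintype.card_fin, nsmul_eq_mul]
        ring

lemma gen_sq_sum_le (a : Edge d → ℝ) (ha : ∀ e, a e ∈ Icc (0:ℝ) 1) (u : Zd d → ℝ) :
    ∑' y : Zd d, ENNReal.ofReal ((gen a u y) ^ 2)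
      ≤ 4 * (d : ℝ≥0∞) * ∑' e : Edge d, ENNReal.ofReal (a e) * grad2 u e := by
  classical
  set A : Edge d → ℝ≥0∞ := fun e => ENNReal.ofReal (a e) * grad2 u e with hAdef
  set S : Zd d → ℝ := fun y => ∑ i : Fin d,
      (a (y, i) * (u (y + Pi.single i 1) - u y) ^ 2
        + a (y - Pi.single i 1, i) * (u (y - Pi.single i 1) - u y) ^ 2) with hSdef
  have key : ∀ (a1 a2 x z : ℝ), 0 ≤ a1 → a1 ≤ 1 → 0 ≤ a2 → a2 ≤ 1 →
      (a1 * x + a2 * z) ^ 2 ≤ 2 * (a1 * x ^ 2) + 2 * (a2 * z ^ 2) := by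
    intro a1 a2 x z h1 h2 h3 h4
    nlinarith [sq_nonneg (a1 * x - a2 * z),
      mul_nonneg (mul_nonneg (sub_nonneg.2 h2) h1) (sq_nonneg x),
      mul_nonneg (mul_nonneg (sub_nonneg.2 h4) h3) (sq_nonneg z)]
  have hSnonneg : ∀ y i, 0 ≤ a (y, i) * (u (y + Pi.single i 1) - u y) ^ 2
        + a (y - Pi.single i 1, i) * (u (y - Pi.single i 1) - u y) ^ 2 := by
    intro y i
    have := (ha (y, i)).1
    have := (ha (y - Pi.single i 1, i)).1
    positivity
  have hreal : ∀ y : Zd d, (gen a u y) ^ 2 ≤ (2 * d) * S y := by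
    intro y
    rw [gen, hSdef]
    have h1 := sq_sum_le_card_mul_sum_sq (s := (Finset.univ : Finset (Fin d)))
      (f := fun i => a (y, i) * (u (y + Pi.single i 1) - u y)
        + a (y - Pi.single i 1, i) * (u (y - Pi.single i 1) - u y))
    rw [Finset.card_univ, Fintype.card_fin] at h1
    refine h1.trans ?_
    rw [Finset.mul_sum, Finset.mul_sum]
    refine Finset.sum_le_sum fun i _ => ?_
    have h2 := key (a (y, i)) (a (y - Pi.single i 1, i))
      (u (y + Pi.single i 1) - u y) (u (y - Pi.single i 1) - u y)
      (ha (y, i)).1 (ha (y, i)).2 (ha (y - Pi.single i 1, i)).1 (ha (y - Pi.single i 1, i)).2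
    nlinarith [h2]
  have hS : ∀ y : Zd d, ENNReal.ofReal (S y)
      = ∑ i : Fin d, (A (y, i) + A (y - Pi.single i 1, i)) := by
    intro y
    rw [hSdef]
    rw [ENNReal.ofReal_sum_of_nonneg fun i _ => hSnonneg y i]
    refine Finset.sum_congr rfl fun i _ => ?_
    rw [ENNReal.ofReal_add (mul_nonneg (ha (y, i)).1 (sq_nonneg _))
      (mul_nonneg (ha (y - Pi.single i 1, i)).1 (sq_nonneg _))]
    congr 1
    · rw [ENNReal.ofReal_mul (ha (y, i)).1, hAdef]
      congr 1
      rw [grad2_eq]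
      rfl
    · rw [ENNReal.ofReal_mul (ha (y - Pi.single i 1, i)).1, hAdef]
      congr 1
      rw [grad2_eq]
      have heq : eplus ((y - Pi.single i 1, i) : Edge d) = y := by
        show y - Pi.single i 1 + Pi.single i 1 = y
        abel
      rw [heq]
      exact congrArg ENNReal.ofReal (sub_sq_comm' _ _)
  calc ∑' y : Zd d, ENNReal.ofReal ((gen a u y) ^ 2)
      ≤ ∑' y : Zd d, ENNReal.ofReal (2 * d) * ENNReal.ofReal (S y) := by
        refine ENNReal.tsum_le_tsum fun y => ?_
        rw [← ENNReal.ofReal_mul (by positivity)]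
        exact ENNReal.ofReal_le_ofReal (hreal y)
    _ = ENNReal.ofReal (2 * d) * ∑' y : Zd d, ENNReal.ofReal (S y) :=
        ENNReal.tsum_mul_left
    _ = ENNReal.ofReal (2 * d) * (2 * ∑' e : Edge d, A e) := by
        congr 1
        calc ∑' y : Zd d, ENNReal.ofReal (S y)
            = ∑' y : Zd d, ∑ i : Fin d, (A (y, i) + A (y - Pi.single i 1, i)) :=
              tsum_congr hS
          _ = ∑ i : Fin d, ∑' y : Zd d, (A (y, i) + A (y - Pi.single i 1, i)) :=
              tsum_sum_comm _
          _ = ∑ i : Fin d, (∑' y : Zd d, A (y, i) + ∑' y : Zd d, A (y - Pi.single i 1, i)) := by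
              refine Finset.sum_congr rfl fun i _ => ?_
              exact ENNReal.tsum_add
          _ = ∑ i : Fin d, (∑' y : Zd d, A (y, i) + ∑' y : Zd d, A (y, i)) := by
              refine Finset.sum_congr rfl fun i _ => ?_
              rw [tsum_shift' i (fun x => A (x, i))]
          _ = 2 * ∑ i : Fin d, ∑' y : Zd d, A (y, i) := by
              rw [Finset.mul_sum]
              refine Finset.sum_congr rfl fun i _ => ?_
              rw [two_mul]
          _ = 2 * ∑' e : Edge d, A e := by rw [tsum_edge]
    _ = 4 * (d : ℝ≥0∞) * ∑' e : Edge d, A e := by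
        rw [ENNReal.ofReal_mul (by norm_num), ENNReal.ofReal_ofNat,
          ENNReal.ofReal_natCast]
        ring

lemma tsum_ofReal_sq_le_one (u : Zd d → ℝ) (hu : ∀ z, u z ∈ Icc (0:ℝ) 1)
    (hsum : HasSum u 1) : ∑' y : Zd d, ENNReal.ofReal (u y ^ 2) ≤ 1 := by
  calc ∑' y : Zd d, ENNReal.ofReal (u y ^ 2)
      ≤ ∑' y : Zd d, ENNReal.ofReal (u y) := by
        refine ENNReal.tsum_le_tsum fun y => ENNReal.ofReal_le_ofReal ?_
        nlinarith [(hu y).1, (hu y).2]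
    _ = ENNReal.ofReal (∑' y, u y) :=
        (ENNReal.ofReal_tsum_of_nonneg (fun y => (hu y).1) hsum.summable).symm
    _ = 1 := by rw [hsum.tsum_eq, ENNReal.ofReal_one]

end Aux2
end AnchoredNash

namespace AnchoredNash

section Main
variable {d : ℕ}

lemma tsum_lintegral_le {α ι : Type*} [MeasurableSpace α] [Countable ι]
    (μ : Measure α) (f : ι → α → ℝ≥0∞) :
    ∑' i, ∫⁻ a, f i a ∂μ ≤ ∫⁻ a, ∑' i, f i a ∂μ := by
  rw [ENNReal.tsum_eq_iSup_sum]
  refine iSup_le fun s => ?_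
  have h1 : ∑ i ∈ s, ∫⁻ a, f i a ∂μ ≤ ∫⁻ a, ∑ i ∈ s, f i a ∂μ := by
    classical
    induction s using Finset.induction with
    | empty => simp
    | insert j s0 hnot ih =>
      rw [Finset.sum_insert hnot]
      refine le_trans (add_le_add_right ih _) ?_
      refine le_trans (le_lintegral_add _ _) (le_of_eq ?_)
      congr 1
      funext a
      rw [Finset.sum_insert hnot]
  refine h1.trans (lintegral_mono fun a => ?_)
  exact Summable.sum_le_tsum s (fun _ _ => zero_le) ENNReal.summable

lemma aemeasurable_primitive (F : ℝ → ℝ) :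
    AEMeasurable (fun r => ∫ τ in (0:ℝ)..r, F τ) (volume.restrict (Ici (0:ℝ))) := by
  set G : ℝ → ℝ := fun r => ∫ τ in (0:ℝ)..r, F τ with hG
  set A : Set ℝ := {r : ℝ | 0 ≤ r ∧ IntegrableOn F (Ioc 0 r)} with hA
  have hdc : ∀ {r r' : ℝ}, r ∈ A → 0 ≤ r' → r' ≤ r → r' ∈ A := by
    intro r r' hr h0 hle
    exact ⟨h0, hr.2.mono_set (Ioc_subset_Ioc le_rfl hle)⟩
  have hord : A.OrdConnected := by
    constructor
    intro x hx y hy z hz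
    exact hdc hy (le_trans hx.1 hz.1) hz.2
  have hAm : MeasurableSet A := hord.measurableSet
  have hG0 : ∀ r ∈ Ici (0:ℝ) \ A, G r = 0 := by
    intro r hr
    apply intervalIntegral.integral_undef
    intro hint
    exact hr.2 ⟨hr.1, (intervalIntegrable_iff_integrableOn_Ioc_of_le hr.1).1 hint⟩
  have hGIoc : ∀ r' ∈ A, ∀ x ∈ Icc (0:ℝ) r', G x = ∫ τ in Ioc 0 x, F τ := by
    intro r' hr' x hx
    exact intervalIntegral.integral_of_le hx.1
  have hcontIcc : ∀ r' ∈ A, ContinuousOn G (Icc 0 r') := by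
    intro r' hr'
    have h1 : IntegrableOn F (Icc 0 r') := by
      rw [integrableOn_Icc_iff_integrableOn_Ioc]
      exact hr'.2
    exact (intervalIntegral.continuousOn_primitive h1).congr (hGIoc r' hr')
  have hcont : ContinuousOn G A := by
    intro r hr
    by_cases hex : ∃ r' ∈ A, r < r'
    · obtain ⟨r', hr', hlt⟩ := hex
      have h1 : ContinuousWithinAt G (Icc 0 r') r :=
        (hcontIcc r' hr') r ⟨hr.1, hlt.le⟩
      refine h1.mono_of_mem_nhdsWithin ?_
      rw [mem_nhdsWithin]
      refine ⟨Iio r', isOpen_Iio, hlt, ?_⟩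
      rintro x ⟨hx1, hx2⟩
      exact ⟨hx2.1, hx1.le⟩
    · push_neg at hex
      have hsub : A ⊆ Icc 0 r := fun x hx => ⟨hx.1, hex x hx⟩
      exact ((hcontIcc r hr) r ⟨hr.1, le_rfl⟩).mono hsub
  have h1 : AEMeasurable G (volume.restrict A) := hcont.aemeasurable hAm
  have h2 : AEMeasurable G (volume.restrict (Ici (0:ℝ) \ A)) := by
    refine (aemeasurable_const (b := (0:ℝ))).congr ?_
    filter_upwards [ae_restrict_mem (measurableSet_Ici.diff hAm)] with x hx
    exact (hG0 x hx).symm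
  have h3 : AEMeasurable G (volume.restrict (A ∪ (Ici (0:ℝ) \ A))) :=
    aemeasurable_union_iff.2 ⟨h1, h2⟩
  exact h3.mono_measure (Measure.restrict_mono (fun x hx => by
    by_cases h : x ∈ A
    · exact Or.inl h
    · exact Or.inr ⟨hx, h⟩) le_rfl)

lemma cs_helper {μ : Measure ℝ} (f : ℝ → ℝ≥0∞) (hf : AEMeasurable f μ) :
    (∫⁻ x, f x ∂μ) ^ 2 ≤ (∫⁻ x, f x ^ 2 ∂μ) * μ Set.univ := by
  have hpq : Real.HolderConjugate 2 2 := Real.HolderConjugate.two_two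
  have hcs := ENNReal.lintegral_mul_le_Lp_mul_Lq μ hpq hf (aemeasurable_const (b := (1:ℝ≥0∞)))
  simp only [Pi.mul_apply, mul_one, ENNReal.one_rpow, lintegral_one] at hcs
  calc (∫⁻ x, f x ∂μ) ^ 2
      ≤ ((∫⁻ x, f x ^ (2:ℝ) ∂μ) ^ ((1:ℝ)/2) * (μ Set.univ) ^ ((1:ℝ)/2)) ^ 2 := by
        rw [pow_two, pow_two]; exact mul_le_mul' hcs hcs
    _ = (∫⁻ x, f x ^ (2:ℝ) ∂μ) * μ Set.univ := by
        rw [mul_pow, ← ENNReal.rpow_natCast ((∫⁻ x, f x ^ (2:ℝ) ∂μ) ^ ((1:ℝ)/2)) 2,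
          ← ENNReal.rpow_natCast ((μ Set.univ) ^ ((1:ℝ)/2)) 2,
          ← ENNReal.rpow_mul, ← ENNReal.rpow_mul]
        norm_num
    _ = (∫⁻ x, f x ^ 2 ∂μ) * μ Set.univ := by
        congr 1
        refine lintegral_congr fun x => ?_
        rw [← ENNReal.rpow_natCast (f x) 2]
        norm_num

end Main

/-- A criterion for moderation (Proposition 4.6). Here
`w_t(e)² = ∫_t^∞ k_{s-t} a_s(e) ds` and `K_u = k_u + ∫_u^∞ s k_s ds`. -/
theorem moderation_criterion
    (d : ℕ) (hd : 1 ≤ d) :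
    ∃ c : ℝ, 0 ≤ c ∧
      ∀ k : ℝ → ℝ, Measurable k → (∀ s, 0 ≤ k s) →
        IntegrableOn (fun s => (1 + s ^ 2) * k s) (Ici (0:ℝ)) →
      ∀ a : ℝ → Edge d → ℝ, IsDynEnv d a →
      ∀ hk : ℝ → ℝ → Zd d → Zd d → ℝ, IsDynKernel d a hk →
      ∀ t : ℝ, 0 ≤ t →
        (∑' e : Edge d,
            (∫⁻ s in Ici t, ENNReal.ofReal (k (s - t) * a s e))
              * grad2 (fun z => hk 0 t 0 z) e)
          ≤ ENNReal.ofReal c *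
              ∫⁻ s in Ici t,
                ENNReal.ofReal (k (s - t) + ∫ τ in Ici (s - t), τ * k τ)
                  * dynD d a hk s := by
  classical
  refine ⟨((2 + 32 * d ^ 2 : ℕ) : ℝ), Nat.cast_nonneg _, ?_⟩
  intro k hkm hknn hkint a hdyn hk hker t ht
  -- abbreviations
  set u : ℝ → Zd d → ℝ := fun τ z => hk 0 τ 0 z with hu
  set F : Zd d → ℝ → ℝ := fun y τ => gen (a τ) (fun z => hk 0 τ 0 z) y with hF
  set D : ℝ → ℝ≥0∞ := fun τ => dynD d a hk τ with hD
  set Kex : ℝ → ℝ := fun v => k v + ∫ τ in Ici v, τ * k τ with hKex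
  -- basic bounds on the kernel
  have hk01 : ∀ τ, 0 ≤ τ → ∀ y, u τ y ∈ Icc (0:ℝ) 1 := by
    intro τ hτ y
    refine ⟨hker.nonneg 0 τ 0 y hτ, ?_⟩
    exact le_hasSum (hker.mass 0 τ 0 hτ) y fun j _ => hker.nonneg 0 τ 0 j hτ
  have hFbnd : ∀ y τ, 0 ≤ τ → |F y τ| ≤ 2 * d := by
    intro y τ hτ
    exact gen_abs_le (a τ) (fun e => hdyn.1 τ e) (u τ) (hk01 τ hτ) y
  -- measurability of the environment in time
  have haAEM : ∀ e : Edge d, AEMeasurable (fun τ => a τ e) (volume.restrict (Ici (0:ℝ))) := by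
    intro e
    obtain ⟨Ds, hDc, hcont⟩ := hdyn.2 e
    have h0 : volume Ds = 0 := hDc.measure_zero _
    have hon : ContinuousOn (fun τ => a τ e) Dsᶜ :=
      fun τ hτ => (hcont τ hτ).continuousWithinAt
    have h1 : AEMeasurable (fun τ => a τ e) (volume.restrict Dsᶜ) :=
      hon.aemeasurable hDc.measurableSet.compl
    have h2 : AEMeasurable (fun τ => a τ e) volume := by
      have hsplit : volume.restrict Ds + volume.restrict Dsᶜ = volume :=
        Measure.restrict_add_restrict_compl hDc.measurableSet
    -- use the split
      rw [← hsplit, aemeasurable_add_measure_iff]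
      constructor
      · have hzero : volume.restrict Ds = 0 := Measure.restrict_eq_zero.2 h0
        rw [hzero]
        exact aemeasurable_zero_measure
      · exact h1
    exact h2.restrict
  -- measurability of the kernel in time
  have hkAEM : ∀ y, AEMeasurable (fun τ => u τ y) (volume.restrict (Ici (0:ℝ))) := by
    intro y
    have h1 := aemeasurable_primitive (fun τ => F y τ)
    refine ((aemeasurable_const (b := if (0:Zd d) = y then (1:ℝ) else 0)).add h1).congr ?_
    filter_upwards [ae_restrict_mem measurableSet_Ici] with r hr
    exact (hker.eqn 0 0 y r hr).symm
  -- measurability of F in time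
  have hFAEM : ∀ y, AEMeasurable (F y) (volume.restrict (Ici (0:ℝ))) := by
    intro y
    have hform : F y = fun τ => ∑ i : Fin d,
        (a τ (y, i) * (u τ (y + Pi.single i 1) - u τ y)
          + a τ (y - Pi.single i 1, i) * (u τ (y - Pi.single i 1) - u τ y)) := rfl
    rw [hform]
    refine Finset.aemeasurable_fun_sum _ fun i _ => ?_
    exact ((haAEM (y, i)).mul ((hkAEM _).sub (hkAEM y))).add
      ((haAEM (y - Pi.single i 1, i)).mul ((hkAEM _).sub (hkAEM y)))
  -- interval integrability of F
  have hFint : ∀ y r, 0 ≤ r → IntervalIntegrable (F y) volume 0 r := by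
    intro y r hr
    rw [intervalIntegrable_iff_integrableOn_Ioc_of_le hr]
    have hmono : volume.restrict (Ioc (0:ℝ) r) ≤ volume.restrict (Ici (0:ℝ)) :=
      Measure.restrict_mono (fun x hx => hx.1.le) le_rfl
    refine Integrable.mono' (integrable_const (2 * (d:ℝ)))
      ((hFAEM y).mono_measure hmono).aestronglyMeasurable ?_
    refine (ae_restrict_iff' measurableSet_Ioc).2 (ae_of_all _ fun τ hτ => ?_)
    rw [Real.norm_eq_abs]
    exact hFbnd y τ hτ.1.le
  -- Duhamel-type identity
  have hstep2 : ∀ y s, t ≤ s → u s y - u t y = ∫ τ in t..s, F y τ := by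
    intro y s hs
    have h1 := hker.eqn 0 0 y s (ht.trans hs)
    have h2 := hker.eqn 0 0 y t ht
    have h3 : u s y - u t y = (∫ τ in (0:ℝ)..s, F y τ) - ∫ τ in (0:ℝ)..t, F y τ := by
      show hk 0 s 0 y - hk 0 t 0 y = _
      rw [h1, h2]
      ring_nf
      rfl
    rw [h3, intervalIntegral.integral_interval_sub_left (hFint y s (ht.trans hs)) (hFint y t ht)]
  -- bounds on D
  have hDle : ∀ τ, 0 ≤ τ → D τ ≤ 4 * (d:ℝ≥0∞) := by
    intro τ hτ
    calc D τ ≤ ∑' e : Edge d, grad2 (u τ) e := by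
          refine ENNReal.tsum_le_tsum fun e => ?_
          exact mul_le_of_le_one_left zero_le (ENNReal.ofReal_le_one.2 (hdyn.1 τ e).2)
      _ ≤ 4 * (d:ℝ≥0∞) * ∑' y, ENNReal.ofReal (u τ y ^ 2) := grad2_tsum_le _
      _ ≤ 4 * (d:ℝ≥0∞) * 1 :=
          mul_le_mul_right (tsum_ofReal_sq_le_one (u τ) (hk01 τ hτ) (hker.mass 0 τ 0 hτ)) _
      _ = 4 * (d:ℝ≥0∞) := mul_one _
  have h4d_ne_top : (4 * (d:ℝ≥0∞)) ≠ ⊤ :=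
    ENNReal.mul_ne_top (by norm_num) (ENNReal.natCast_ne_top d)
  have hDne : ∀ τ, 0 ≤ τ → D τ ≠ ⊤ :=
    fun τ hτ => ((hDle τ hτ).trans_lt (lt_top_iff_ne_top.2 h4d_ne_top)).ne
  -- measurability of D
  have hDAEM : AEMeasurable D (volume.restrict (Ici (0:ℝ))) := by
    have hform : D = fun τ => ∑' e : Edge d, ENNReal.ofReal (a τ e)
        * ENNReal.ofReal ((hk 0 τ 0 (eplus e) - hk 0 τ 0 e.1) ^ 2) := by
      funext τ
      exact tsum_congr fun e => by rw [grad2_eq]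
    rw [hform]
    exact AEMeasurable.ennreal_tsum fun e =>
      ((haAEM e).ennreal_ofReal.mul
        (((hkAEM (eplus e)).sub (hkAEM e.1)).pow_const 2).ennreal_ofReal)
  have hDt : AEMeasurable D (volume.restrict (Ici t)) :=
    hDAEM.mono_measure (Measure.restrict_mono (Ici_subset_Ici.2 ht) le_rfl)
  have hDoi : AEMeasurable D (volume.restrict (Ioi t)) :=
    hDAEM.mono_measure (Measure.restrict_mono (fun x hx => le_trans ht hx.le) le_rfl)
  -- the ℓ² bound on u_s - u_t
  have hQ : ∀ s, t ≤ s → ∑' y : Zd d, ENNReal.ofReal ((u s y - u t y) ^ 2)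
      ≤ ENNReal.ofReal (s - t) * (4 * (d:ℝ≥0∞) * ∫⁻ τ in Ioc t s, D τ) := by
    intro s hs
    have hmono : volume.restrict (Ioc t s) ≤ volume.restrict (Ici (0:ℝ)) :=
      Measure.restrict_mono (fun x hx => le_trans ht hx.1.le) le_rfl
    have hper : ∀ y, ENNReal.ofReal ((u s y - u t y) ^ 2)
        ≤ (∫⁻ τ in Ioc t s, ENNReal.ofReal ((F y τ) ^ 2)) * ENNReal.ofReal (s - t) := by
      intro y
      have h0 : ENNReal.ofReal ((u s y - u t y) ^ 2) = (‖u s y - u t y‖₊ : ℝ≥0∞) ^ 2 :=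
        (enn_sq _).symm
      rw [h0, hstep2 y s hs, intervalIntegral.integral_of_le hs]
      have h1 : (‖∫ τ in Ioc t s, F y τ‖₊ : ℝ≥0∞) ≤ ∫⁻ τ in Ioc t s, (‖F y τ‖₊ : ℝ≥0∞) :=
        enorm_integral_le_lintegral_enorm _
      have hle2 : (‖∫ τ in Ioc t s, F y τ‖₊ : ℝ≥0∞) ^ 2
          ≤ (∫⁻ τ in Ioc t s, (‖F y τ‖₊ : ℝ≥0∞)) ^ 2 := by
        rw [pow_two, pow_two]; exact mul_le_mul' h1 h1
      refine hle2.trans ?_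
      have hfa : AEMeasurable (fun τ => (‖F y τ‖₊ : ℝ≥0∞)) (volume.restrict (Ioc t s)) :=
        ((hFAEM y).mono_measure hmono).enorm
      have hcs2 := cs_helper (μ := volume.restrict (Ioc t s))
        (fun τ => (‖F y τ‖₊ : ℝ≥0∞)) hfa
      rw [Measure.restrict_apply_univ, Real.volume_Ioc] at hcs2
      refine hcs2.trans (le_of_eq ?_)
      congr 1
      exact lintegral_congr fun τ => enn_sq _
    calc ∑' y : Zd d, ENNReal.ofReal ((u s y - u t y) ^ 2)
        ≤ ∑' y : Zd d, (∫⁻ τ in Ioc t s, ENNReal.ofReal ((F y τ) ^ 2)) * ENNReal.ofReal (s - t) :=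
          ENNReal.tsum_le_tsum hper
      _ = (∑' y : Zd d, ∫⁻ τ in Ioc t s, ENNReal.ofReal ((F y τ) ^ 2)) * ENNReal.ofReal (s - t) :=
          ENNReal.tsum_mul_right
      _ ≤ (∫⁻ τ in Ioc t s, ∑' y : Zd d, ENNReal.ofReal ((F y τ) ^ 2)) * ENNReal.ofReal (s - t) :=
          mul_le_mul_left (tsum_lintegral_le _ _) _
      _ ≤ (∫⁻ τ in Ioc t s, 4 * (d:ℝ≥0∞) * D τ) * ENNReal.ofReal (s - t) := by
          refine mul_le_mul_left (lintegral_mono fun τ => ?_) _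
          exact gen_sq_sum_le (a τ) (fun e => hdyn.1 τ e) (fun z => hk 0 τ 0 z)
      _ = ENNReal.ofReal (s - t) * (4 * (d:ℝ≥0∞) * ∫⁻ τ in Ioc t s, D τ) := by
          rw [lintegral_const_mul' _ _ h4d_ne_top]
          ring
  -- the pointwise-in-s master bound
  have hmaster : ∀ s, t ≤ s →
      ∑' e : Edge d, ENNReal.ofReal (k (s - t) * a s e) * grad2 (fun z => hk 0 t 0 z) e
        ≤ 2 * (ENNReal.ofReal (k (s - t)) * D s)
          + (32 * (d:ℝ≥0∞) ^ 2) *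
            (ENNReal.ofReal (k (s - t)) * (ENNReal.ofReal (s - t) * ∫⁻ τ in Ioc t s, D τ)) := by
    intro s hs
    have h1 : ∀ e : Edge d, ENNReal.ofReal (k (s - t) * a s e) * grad2 (fun z => hk 0 t 0 z) e
        = ENNReal.ofReal (k (s - t)) * (ENNReal.ofReal (a s e) * grad2 (fun z => hk 0 t 0 z) e) :=
      fun e => by rw [ENNReal.ofReal_mul (hknn _), mul_assoc]
    calc ∑' e : Edge d, ENNReal.ofReal (k (s - t) * a s e) * grad2 (fun z => hk 0 t 0 z) e
        = ∑' e : Edge d, ENNReal.ofReal (k (s - t))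
            * (ENNReal.ofReal (a s e) * grad2 (fun z => hk 0 t 0 z) e) := tsum_congr h1
      _ = ENNReal.ofReal (k (s - t))
            * ∑' e : Edge d, ENNReal.ofReal (a s e) * grad2 (fun z => hk 0 t 0 z) e :=
          ENNReal.tsum_mul_left
      _ ≤ ENNReal.ofReal (k (s - t)) * (2 * D s
            + 8 * (d:ℝ≥0∞) * ∑' y, ENNReal.ofReal ((u s y - u t y) ^ 2)) := by
          refine mul_le_mul_right ?_ _
          exact moderate_pointwise (a s) (fun e => hdyn.1 s e) (fun z => hk 0 t 0 z)
            (fun z => hk 0 s 0 z)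
      _ ≤ ENNReal.ofReal (k (s - t)) * (2 * D s
            + 8 * (d:ℝ≥0∞) * (ENNReal.ofReal (s - t) * (4 * (d:ℝ≥0∞) * ∫⁻ τ in Ioc t s, D τ))) := by
          exact mul_le_mul_right (add_le_add_right (mul_le_mul_right (hQ s hs) _) _) _
      _ = 2 * (ENNReal.ofReal (k (s - t)) * D s)
          + (32 * (d:ℝ≥0∞) ^ 2) *
            (ENNReal.ofReal (k (s - t)) * (ENNReal.ofReal (s - t) * ∫⁻ τ in Ioc t s, D τ)) := by
          ring
  -- measurable helpers
  have hkm1 : Measurable fun s => ENNReal.ofReal (k (s - t)) :=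
    (hkm.comp (measurable_id.sub measurable_const)).ennreal_ofReal
  have hkm2 : Measurable fun s => ENNReal.ofReal (s - t) :=
    (measurable_id.sub measurable_const).ennreal_ofReal
  -- nonnegativity of the tail integral
  have hJnn : ∀ s, t ≤ s → 0 ≤ ∫ τ in Ici (s - t), τ * k τ := by
    intro s hs
    refine setIntegral_nonneg measurableSet_Ici fun τ hτ => ?_
    exact mul_nonneg (le_trans (sub_nonneg.2 hs) hτ) (hknn τ)
  -- integrability of τ k τ
  have hskint : IntegrableOn (fun σ => σ * k σ) (Ici (0:ℝ)) := by
    refine Integrable.mono' hkint ?_ ?_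
    · exact ((measurable_id.mul hkm).aestronglyMeasurable)
    · refine (ae_restrict_iff' measurableSet_Ici).2 (ae_of_all _ fun σ hσ => ?_)
      have hσ0 : (0:ℝ) ≤ σ := hσ
      rw [Real.norm_eq_abs, abs_of_nonneg (mul_nonneg hσ0 (hknn σ))]
      have h1 : σ ≤ 1 + σ ^ 2 := by nlinarith
      exact mul_le_mul_of_nonneg_right h1 (hknn σ)
  -- the inner integral computation
  have hinner : ∀ τ, t < τ →
      (∫⁻ s in Ici t, (Ici τ).indicator (fun s =>
          ENNReal.ofReal (k (s - t)) * ENNReal.ofReal (s - t)) s)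
        ≤ ENNReal.ofReal (Kex (τ - t)) := by
    intro τ hτ
    set J : ℝ → ℝ≥0∞ := (Ici (τ - t)).indicator (fun σ => ENNReal.ofReal (σ * k σ)) with hJ
    have hind : ∀ s, (Ici τ).indicator (fun s =>
        ENNReal.ofReal (k (s - t)) * ENNReal.ofReal (s - t)) s = J (s - t) := by
      intro s
      by_cases h : τ ≤ s
      · have hmem : s ∈ Ici τ := h
        have hmem2 : s - t ∈ Ici (τ - t) := by
          simp only [mem_Ici]; linarith
        rw [indicator_of_mem hmem, hJ, indicator_of_mem hmem2]
        rw [← ENNReal.ofReal_mul (hknn _), mul_comm]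
      · have hmem : s ∉ Ici τ := h
        have hmem2 : s - t ∉ Ici (τ - t) := by
          simp only [mem_Ici, not_le] at h ⊢; linarith
        rw [indicator_of_notMem hmem, hJ, indicator_of_notMem hmem2]
    calc (∫⁻ s in Ici t, (Ici τ).indicator (fun s =>
            ENNReal.ofReal (k (s - t)) * ENNReal.ofReal (s - t)) s)
        ≤ ∫⁻ s, (Ici τ).indicator (fun s =>
            ENNReal.ofReal (k (s - t)) * ENNReal.ofReal (s - t)) s :=
          setLIntegral_le_lintegral _ _
      _ = ∫⁻ s, J (s - t) := by
          exact lintegral_congr hind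
      _ = ∫⁻ σ, J σ := lintegral_sub_right_eq_self J t
      _ = ∫⁻ σ in Ici (τ - t), ENNReal.ofReal (σ * k σ) :=
          lintegral_indicator measurableSet_Ici _
      _ = ENNReal.ofReal (∫ σ in Ici (τ - t), σ * k σ) := by
          have hτt : (0:ℝ) ≤ τ - t := by linarith
          have hInt : IntegrableOn (fun σ => σ * k σ) (Ici (τ - t)) :=
            hskint.mono_set (Ici_subset_Ici.2 hτt)
          have hnn : 0 ≤ᵐ[volume.restrict (Ici (τ - t))] fun σ => σ * k σ := by
            refine (ae_restrict_iff' measurableSet_Ici).2 (ae_of_all _ fun σ hσ => ?_)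
            simp only [Pi.zero_apply]
            exact mul_nonneg (le_trans hτt hσ) (hknn σ)
          exact (ofReal_integral_eq_lintegral_ofReal hInt hnn).symm
      _ ≤ ENNReal.ofReal (Kex (τ - t)) := by
          refine ENNReal.ofReal_le_ofReal ?_
          have hKv : Kex (τ - t) = k (τ - t) + ∫ σ in Ici (τ - t), σ * k σ := rfl
          rw [hKv]
          have := hknn (τ - t)
          linarith
  -- Fubini for the second term
  have hswap :
      (∫⁻ s in Ici t, (ENNReal.ofReal (k (s - t)) * ENNReal.ofReal (s - t))
          * ∫⁻ τ in Ioc t s, D τ)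
        ≤ ∫⁻ τ in Ici t, ENNReal.ofReal (Kex (τ - t)) * D τ := by
    have hΦ : ∀ s, (∫⁻ τ in Ioc t s, D τ) = ∫⁻ τ in Ioi t, (Iic s).indicator D τ := by
      intro s
      rw [lintegral_indicator measurableSet_Iic, Measure.restrict_restrict measurableSet_Iic,
        Set.Iic_inter_Ioi]
    have hg_ne_top : ∀ s : ℝ, (ENNReal.ofReal (k (s - t)) * ENNReal.ofReal (s - t)) ≠ ⊤ :=
      fun s => ENNReal.mul_ne_top ENNReal.ofReal_ne_top ENNReal.ofReal_ne_top
    have hswap0 :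
        (∫⁻ s in Ici t, ∫⁻ τ in Ioi t, (ENNReal.ofReal (k (s - t)) * ENNReal.ofReal (s - t))
            * (Iic s).indicator D τ)
          = ∫⁻ τ in Ioi t, ∫⁻ s in Ici t,
              (ENNReal.ofReal (k (s - t)) * ENNReal.ofReal (s - t)) * (Iic s).indicator D τ := by
      refine lintegral_lintegral_swap ?_
      have hset : MeasurableSet {p : ℝ × ℝ | p.2 ≤ p.1} :=
        measurableSet_le measurable_snd measurable_fst
      have hDp : AEMeasurable (fun p : ℝ × ℝ => D p.2)
          ((volume.restrict (Ici t)).prod (volume.restrict (Ioi t))) :=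
        hDoi.comp_quasiMeasurePreserving Measure.quasiMeasurePreserving_snd
      have heqind : (fun p : ℝ × ℝ => (Iic p.1).indicator D p.2)
          = {p : ℝ × ℝ | p.2 ≤ p.1}.indicator (fun p => D p.2) := by
        funext p
        by_cases h : p.2 ≤ p.1
        · rw [indicator_of_mem (mem_Iic.2 h), indicator_of_mem (by exact h)]
        · rw [indicator_of_notMem (fun hc => h (mem_Iic.1 hc)),
            indicator_of_notMem (by exact h)]
      have hin : AEMeasurable (fun p : ℝ × ℝ => (Iic p.1).indicator D p.2)
          ((volume.restrict (Ici t)).prod (volume.restrict (Ioi t))) := by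
        rw [heqind]
        exact hDp.indicator hset
      have hgp : Measurable (fun p : ℝ × ℝ =>
          ENNReal.ofReal (k (p.1 - t)) * ENNReal.ofReal (p.1 - t)) :=
        ((hkm.comp (measurable_fst.sub measurable_const)).ennreal_ofReal).mul
          ((measurable_fst.sub measurable_const).ennreal_ofReal)
      exact hgp.aemeasurable.mul hin
    calc (∫⁻ s in Ici t, (ENNReal.ofReal (k (s - t)) * ENNReal.ofReal (s - t))
            * ∫⁻ τ in Ioc t s, D τ)
        = ∫⁻ s in Ici t, ∫⁻ τ in Ioi t,
            (ENNReal.ofReal (k (s - t)) * ENNReal.ofReal (s - t)) * (Iic s).indicator D τ := by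
          refine lintegral_congr fun s => ?_
          rw [hΦ s, lintegral_const_mul' _ _ (hg_ne_top s)]
      _ = ∫⁻ τ in Ioi t, ∫⁻ s in Ici t,
            (ENNReal.ofReal (k (s - t)) * ENNReal.ofReal (s - t)) * (Iic s).indicator D τ :=
          hswap0
      _ ≤ ∫⁻ τ in Ioi t, ENNReal.ofReal (Kex (τ - t)) * D τ := by
          refine lintegral_mono_ae ((ae_restrict_mem measurableSet_Ioi).mono fun τ hτ => ?_)
          have hτ' : t < τ := hτ
          have hid : ∀ s, (ENNReal.ofReal (k (s - t)) * ENNReal.ofReal (s - t))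
              * (Iic s).indicator D τ
              = (Ici τ).indicator (fun s' =>
                  ENNReal.ofReal (k (s' - t)) * ENNReal.ofReal (s' - t)) s * D τ := by
            intro s
            by_cases h : τ ≤ s
            · rw [indicator_of_mem (mem_Iic.2 h), indicator_of_mem (mem_Ici.2 h)]
            · rw [indicator_of_notMem (fun hc => h (mem_Iic.1 hc)),
                indicator_of_notMem (fun hc => h (mem_Ici.1 hc)), mul_zero, zero_mul]
          calc (∫⁻ s in Ici t, (ENNReal.ofReal (k (s - t)) * ENNReal.ofReal (s - t))
                  * (Iic s).indicator D τ)
              = (∫⁻ s in Ici t, (Ici τ).indicator (fun s' =>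
                  ENNReal.ofReal (k (s' - t)) * ENNReal.ofReal (s' - t)) s) * D τ := by
                rw [← lintegral_mul_const' (D τ) _ (hDne τ (le_trans ht hτ'.le))]
                exact lintegral_congr hid
            _ ≤ ENNReal.ofReal (Kex (τ - t)) * D τ :=
                mul_le_mul_left (hinner τ hτ') _
      _ ≤ ∫⁻ τ in Ici t, ENNReal.ofReal (Kex (τ - t)) * D τ :=
          lintegral_mono' (Measure.restrict_mono Ioi_subset_Ici_self le_rfl) fun τ => le_rfl
  -- assemble
  set R : ℝ≥0∞ := ∫⁻ s in Ici t, ENNReal.ofReal (Kex (s - t)) * D s with hR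
  have hmain : (∑' e : Edge d,
      (∫⁻ s in Ici t, ENNReal.ofReal (k (s - t) * a s e))
        * grad2 (fun z => hk 0 t 0 z) e)
      ≤ 2 * R + (32 * (d:ℝ≥0∞) ^ 2) * R := by
    calc (∑' e : Edge d,
        (∫⁻ s in Ici t, ENNReal.ofReal (k (s - t) * a s e))
          * grad2 (fun z => hk 0 t 0 z) e)
        = ∑' e : Edge d, ∫⁻ s in Ici t,
            ENNReal.ofReal (k (s - t) * a s e) * grad2 (fun z => hk 0 t 0 z) e := by
          refine tsum_congr fun e => ?_
          exact (lintegral_mul_const' _ _ (grad2_ne_top _ _)).symm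
      _ ≤ ∫⁻ s in Ici t, ∑' e : Edge d,
            ENNReal.ofReal (k (s - t) * a s e) * grad2 (fun z => hk 0 t 0 z) e :=
          tsum_lintegral_le _ _
      _ ≤ ∫⁻ s in Ici t, (2 * (ENNReal.ofReal (k (s - t)) * D s)
            + (32 * (d:ℝ≥0∞) ^ 2) *
              (ENNReal.ofReal (k (s - t)) * (ENNReal.ofReal (s - t) * ∫⁻ τ in Ioc t s, D τ))) :=
          lintegral_mono_ae ((ae_restrict_mem measurableSet_Ici).mono fun s hs => hmaster s hs)
      _ = (∫⁻ s in Ici t, 2 * (ENNReal.ofReal (k (s - t)) * D s))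
            + ∫⁻ s in Ici t, (32 * (d:ℝ≥0∞) ^ 2) *
              (ENNReal.ofReal (k (s - t)) * (ENNReal.ofReal (s - t) * ∫⁻ τ in Ioc t s, D τ)) := by
          refine lintegral_add_left' ?_ _
          exact (hkm1.aemeasurable.mul hDt).const_mul 2
      _ ≤ 2 * R + (32 * (d:ℝ≥0∞) ^ 2) * R := by
          refine add_le_add ?_ ?_
          · rw [lintegral_const_mul' 2 _ (by norm_num)]
            refine mul_le_mul_right ?_ _
            refine lintegral_mono_ae ((ae_restrict_mem measurableSet_Ici).mono fun s hs => ?_)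
            refine mul_le_mul_left (ENNReal.ofReal_le_ofReal ?_) _
            have hKv : Kex (s - t) = k (s - t) + ∫ σ in Ici (s - t), σ * k σ := rfl
            rw [hKv]
            have := hJnn s hs
            linarith
          · rw [lintegral_const_mul' _ _ (by
              exact ENNReal.mul_ne_top (by norm_num)
                (ENNReal.pow_ne_top (ENNReal.natCast_ne_top d)))]
            refine mul_le_mul_right ?_ _
            refine le_trans (le_of_eq ?_) hswap
            refine lintegral_congr fun s => ?_
            rw [mul_assoc]
      -- done
  refine hmain.trans (le_of_eq ?_)
  have hc : ENNReal.ofReal ((2 + 32 * d ^ 2 : ℕ) : ℝ) = 2 + 32 * (d:ℝ≥0∞) ^ 2 := by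
    rw [ENNReal.ofReal_natCast]
    push_cast
    ring
  rw [hc, hR]
  ring

end AnchoredNash
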